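/- Let Ψ satisfy Ψ'(x) = exp(−3 Ψ(x)²) with Ψ(0) = 0, fix σ ∈ (0, 1/100], define q_i = Ψ'(iσ) and π_i = σ + Σ_{j=0}^{i−1} σ q_j. Then for every i ≥ 0, 0 ≤ q_i − q_{i+1} ≤ 12 σ · min{q_i, q_{i+1}, q_i π_i}. -/

import Mathlib

set_option maxHeartbeats 1000000 in
theorem stmt_8 (Ψ : ℝ → ℝ) (σ : ℝ) (hσ : 0 < σ) (hσ' : σ ≤ 1 / 100)
    (hΨ : ∀ x : ℝ, 0 ≤ x → HasDerivAt Ψ (Real.exp (-3 * Ψ x ^ 2)) x)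
    (hΨ0 : Ψ 0 = 0)
    (q : ℕ → ℝ) (hq : ∀ j : ℕ, q j = deriv Ψ (j * σ))
    (Pi : ℕ → ℝ) (hPi : ∀ i : ℕ, Pi i = σ + ∑ j ∈ Finset.range i, σ * q j) :
    ∀ i : ℕ, 0 ≤ q i - q (i + 1) ∧
      q i - q (i + 1) ≤ 12 * σ * min (min (q i) (q (i + 1))) (q i * Pi i) := by
  -- MVT for Ψ
  have key : ∀ x y : ℝ, 0 ≤ x → x < y →
      ∃ c, x < c ∧ c < y ∧ Ψ y - Ψ x = Real.exp (-3 * Ψ c ^ 2) * (y - x) := by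
    intro x y hx hxy
    have hcont : ContinuousOn Ψ (Set.Icc x y) := fun z hz =>
      ((hΨ z (hx.trans hz.1)).continuousAt).continuousWithinAt
    have hderiv : ∀ z ∈ Set.Ioo x y, HasDerivAt Ψ (Real.exp (-3 * Ψ z ^ 2)) z :=
      fun z hz => hΨ z (hx.trans hz.1.le)
    obtain ⟨c, hc, hc'⟩ := exists_hasDerivAt_eq_slope Ψ _ hxy hcont hderiv
    refine ⟨c, hc.1, hc.2, ?_⟩
    rw [hc', div_mul_cancel₀]
    linarith
  have mono : ∀ x y : ℝ, 0 ≤ x → x ≤ y → Ψ x ≤ Ψ y ∧ Ψ y - Ψ x ≤ y - x := by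
    intro x y hx hxy
    rcases eq_or_lt_of_le hxy with rfl | h
    · simp
    obtain ⟨c, _, _, hc⟩ := key x y hx h
    have h1 : Real.exp (-3 * Ψ c ^ 2) ≤ 1 := by
      rw [Real.exp_le_one_iff]
      nlinarith [sq_nonneg (Ψ c)]
    have h2 := Real.exp_pos (-3 * Ψ c ^ 2)
    constructor
    · nlinarith
    · nlinarith
  have nonneg : ∀ x : ℝ, 0 ≤ x → 0 ≤ Ψ x := by
    intro x hx
    have := (mono 0 x le_rfl hx).1
    rwa [hΨ0] at this
  have qmono : ∀ x y : ℝ, 0 ≤ x → x ≤ y →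
      Real.exp (-3 * Ψ y ^ 2) ≤ Real.exp (-3 * Ψ x ^ 2) := by
    intro x y hx hxy
    apply Real.exp_le_exp.2
    have h1 := (mono x y hx hxy).1
    have h2 := nonneg x hx
    nlinarith
  have step : ∀ x y : ℝ, 0 ≤ x → x ≤ y →
      Ψ y - Ψ x ≤ (y - x) * Real.exp (-3 * Ψ x ^ 2) := by
    intro x y hx hxy
    rcases eq_or_lt_of_le hxy with rfl | h
    · simp
    obtain ⟨c, hc1, _, hc⟩ := key x y hx h
    have h1 := qmono x c hx hc1.le
    have h2 := Real.exp_pos (-3 * Ψ c ^ 2)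
    nlinarith
  have qval : ∀ j : ℕ, q j = Real.exp (-3 * Ψ (j * σ) ^ 2) := by
    intro j
    rw [hq j, (hΨ ((j : ℝ) * σ) (by positivity)).deriv]
  have sum_ge : ∀ i : ℕ, Ψ (i * σ) ≤ ∑ j ∈ Finset.range i, σ * q j := by
    intro i
    induction i with
    | zero => simp [hΨ0]
    | succ n ih =>
      have hn0 : (0:ℝ) ≤ n * σ := by positivity
      have h1 := step (n * σ) (n * σ + σ) hn0 (by linarith)
      have h2 : ((n + 1 : ℕ) : ℝ) * σ = n * σ + σ := by push_cast; ring
      have h3 : (n * σ + σ - n * σ) = σ := by ring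
      rw [h3] at h1
      rw [Finset.sum_range_succ, h2, qval n]
      linarith
  -- MVT for x ↦ exp (-3 Ψ(x)^2)
  have gkey : ∀ x y : ℝ, 0 ≤ x → x < y → ∃ c, x < c ∧ c < y ∧
      Real.exp (-3 * Ψ x ^ 2) - Real.exp (-3 * Ψ y ^ 2)
        = 6 * Ψ c * Real.exp (-3 * Ψ c ^ 2) * Real.exp (-3 * Ψ c ^ 2) * (y - x) := by
    intro x y hx hxy
    have hd : ∀ z : ℝ, 0 ≤ z → HasDerivAt (fun t => Real.exp (-3 * Ψ t ^ 2))
        (-6 * Ψ z * Real.exp (-3 * Ψ z ^ 2) * Real.exp (-3 * Ψ z ^ 2)) z := by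
      intro z hz
      have h := (((hΨ z hz).pow 2).const_mul (-3)).exp
      convert h using 1
      all_goals simp only [_root_.Pi.pow_apply]
      push_cast
      ring
    have hcont : ContinuousOn (fun t => Real.exp (-3 * Ψ t ^ 2)) (Set.Icc x y) :=
      fun z hz => ((hd z (hx.trans hz.1)).continuousAt).continuousWithinAt
    have hderiv : ∀ z ∈ Set.Ioo x y, HasDerivAt (fun t => Real.exp (-3 * Ψ t ^ 2))
        (-6 * Ψ z * Real.exp (-3 * Ψ z ^ 2) * Real.exp (-3 * Ψ z ^ 2)) z :=
      fun z hz => hd z (hx.trans hz.1.le)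
    obtain ⟨c, hc, hc'⟩ := exists_hasDerivAt_eq_slope _ _ hxy hcont hderiv
    refine ⟨c, hc.1, hc.2, ?_⟩
    have hyx : y - x ≠ 0 := by intro h; linarith [sub_pos.2 hxy]
    rw [eq_div_iff hyx] at hc'
    linear_combination hc'
  intro i
  have h01 : (0:ℝ) ≤ i * σ := by positivity
  have hcast : ((i + 1 : ℕ) : ℝ) * σ = i * σ + σ := by push_cast; ring
  obtain ⟨c, hc1, hc2, hc⟩ := gkey (i * σ) (i * σ + σ) h01 (by linarith)
  have hq0 : q i = Real.exp (-3 * Ψ ((i : ℝ) * σ) ^ 2) := qval i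
  have hq1 : q (i + 1) = Real.exp (-3 * Ψ ((i : ℝ) * σ + σ) ^ 2) := by
    rw [qval (i + 1), hcast]
  set u := Ψ c with hu
  set a := Ψ ((i : ℝ) * σ) with haa
  set b := Ψ ((i : ℝ) * σ + σ) with hbb
  have hua : a ≤ u := (mono _ _ h01 hc1.le).1
  have hub : u ≤ b := (mono c _ (h01.trans hc1.le) hc2.le).1
  have hba : b - a ≤ σ := by
    have := (mono ((i : ℝ) * σ) ((i : ℝ) * σ + σ) h01 (by linarith)).2
    linarith
  have ha0 : 0 ≤ a := nonneg _ h01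
  have hu0 : 0 ≤ u := ha0.trans hua
  have hb0 : 0 ≤ b := hu0.trans hub
  set X := Real.exp (-3 * u ^ 2) with hX
  have hXpos : 0 < X := hX ▸ Real.exp_pos _
  clear_value u a b X
  have hdiff : q i - q (i + 1) = 6 * u * X * X * σ := by
    rw [hq0, hq1]
    have h3 : ((i : ℝ) * σ + σ - (i : ℝ) * σ) = σ := by ring
    rw [hc, h3]
  have hqd : q (i + 1) ≤ q i := by
    rw [hq0, hq1]
    apply Real.exp_le_exp.2
    nlinarith [hua.trans hub]
  constructor
  · rw [hdiff]
    have : 0 ≤ 6 * u := by linarith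
    exact mul_nonneg (mul_nonneg (mul_nonneg this hXpos.le) hXpos.le) hσ.le
  -- bound by q (i+1)
  have boundA : q i - q (i + 1) ≤ 12 * σ * q (i + 1) := by
    set T := Real.exp (3 * u ^ 2 - 6 * u * σ - 3 * σ ^ 2) with hT
    have hTpos : 0 < T := hT ▸ Real.exp_pos _
    clear_value T
    have ht := Real.add_one_le_exp (3 * u ^ 2 - 6 * u * σ - 3 * σ ^ 2)
    have r1 : u ≤ 2 * T := by
      nlinarith [sq_nonneg (u - 577 / 1000), mul_le_mul_of_nonneg_left hσ' hu0,
        sq_nonneg σ, hσ.le]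
    have hid : X * X * T = Real.exp (-3 * (u + σ) ^ 2) := by
      rw [hX, hT, ← Real.exp_add, ← Real.exp_add]
      ring_nf
    have hE : Real.exp (-3 * (u + σ) ^ 2) ≤ Real.exp (-3 * b ^ 2) := by
      apply Real.exp_le_exp.2
      nlinarith
    have hQ : X * X * T ≤ q (i + 1) := by
      rw [hq1]
      calc X * X * T = Real.exp (-3 * (u + σ) ^ 2) := hid
        _ ≤ _ := hE
    rw [hdiff]
    calc 6 * u * X * X * σ = 6 * (u * (X * X * σ)) := by ring
      _ ≤ 6 * (2 * T * (X * X * σ)) := by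
          have := mul_le_mul_of_nonneg_right r1
            (by positivity : (0:ℝ) ≤ X * X * σ)
          linarith
      _ = 12 * σ * (X * X * T) := by ring
      _ ≤ 12 * σ * q (i + 1) := by
          have := mul_le_mul_of_nonneg_left hQ (by positivity : (0:ℝ) ≤ 12 * σ)
          linarith
  -- bound by q i * Pi i
  have boundB : q i - q (i + 1) ≤ 12 * σ * (q i * Pi i) := by
    have hPi_ge : σ + a ≤ Pi i := by
      rw [hPi i]
      linarith [sum_ge i]
    have hPipos : 0 < Pi i := by linarith
    have huPi : u ≤ Pi i := by linarith
    have hX1 : X ≤ 1 := by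
      rw [hX, Real.exp_le_one_iff]
      nlinarith [sq_nonneg u]
    have hXa : X ≤ Real.exp (-3 * a ^ 2) := by
      rw [hX]
      apply Real.exp_le_exp.2
      nlinarith
    have p1 : u * X ≤ Pi i * Real.exp (-3 * a ^ 2) :=
      mul_le_mul huPi hXa hXpos.le hPipos.le
    have p2 : u * X * X ≤ Pi i * Real.exp (-3 * a ^ 2) * 1 :=
      mul_le_mul p1 hX1 hXpos.le (by positivity)
    rw [hdiff, hq0]
    calc 6 * u * X * X * σ = 6 * σ * (u * X * X) := by ring
      _ ≤ 6 * σ * (Pi i * Real.exp (-3 * a ^ 2) * 1) := by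
          have := mul_le_mul_of_nonneg_left p2 (by positivity : (0:ℝ) ≤ 6 * σ)
          linarith
      _ ≤ 12 * σ * (Real.exp (-3 * a ^ 2) * Pi i) := by
          have h9 : 0 ≤ σ * (Pi i * Real.exp (-3 * a ^ 2)) :=
            mul_nonneg hσ.le (mul_nonneg hPipos.le (Real.exp_pos _).le)
          nlinarith
  rw [min_eq_right hqd]
  rcases le_total (q (i + 1)) (q i * Pi i) with h | h
  · rw [min_eq_left h]; exact boundA
  · rw [min_eq_right h]; exact boundB
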